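/- For any distance space X, the injective envelope EX is itself an injective distance space: for every isometry i : EX → Z into a distance space Z there exists a non-expanding map r : Z → EX with r ∘ i = id_{EX}. -/

import Mathlib

open scoped ENNReal

universe u

structure DistSpace (X : Type u) where
  d : X → X → ℝ≥0∞
  refl : ∀ x, d x x = 0
  symm : ∀ x y, d x y = d y x
  triangle : ∀ x y z, d x z ≤ d x y + d y z

def Delta {X : Type u} (D : DistSpace X) : Set (X → ℝ≥0∞) :=
  {f | ∀ x y, D.d x y ≤ f x + f y}

def Extremal {X : Type u} (D : DistSpace X) (f : X → ℝ≥0∞) : Prop :=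
  f ∈ Delta D ∧ ∀ g ∈ Delta D, g ≤ f → g = f

noncomputable def supDist {X : Type u} (f g : X → ℝ≥0∞) : ℝ≥0∞ :=
  ⨆ x, (f x - g x) ⊔ (g x - f x)

theorem extremal_ddist {X : Type u} (D : DistSpace X) (x : X) :
    Extremal D (fun z => D.d x z) := by
  constructor
  · intro y z
    calc D.d y z ≤ D.d y x + D.d x z := D.triangle y x z
    _ = D.d x y + D.d x z := by rw [D.symm y x]
  · intro g hg hle
    funext z
    have hx : g x = 0 := le_antisymm (by simpa [D.refl] using hle x) zero_le
    have h1 : D.d x z ≤ g z := by simpa [hx] using hg x z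
    exact le_antisymm (hle z) h1

/-- The injective envelope `EX` of a distance space `X`: the set of extremal
functions, with the sup-distance. -/
def EnvType {X : Type u} (D : DistSpace X) : Type u :=
  {f : X → ℝ≥0∞ // Extremal D f}

/-- The canonical isometric embedding `e_X : X → EX`, `x ↦ d_X(x,·)`. -/
noncomputable def eEnv {X : Type u} (D : DistSpace X) (x : X) : EnvType D :=
  ⟨fun z => D.d x z, extremal_ddist D x⟩

-- ===== auxiliary lemmas =====

lemma supDist_le_iff {X : Type u} {f g : X → ℝ≥0∞} {r : ℝ≥0∞} :
    supDist f g ≤ r ↔ ∀ x, f x ≤ g x + r ∧ g x ≤ f x + r := by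
  unfold supDist
  rw [iSup_le_iff]
  refine forall_congr' fun x => ?_
  rw [sup_le_iff, tsub_le_iff_right, tsub_le_iff_right, add_comm r (g x), add_comm r (f x)]

lemma supDist_self {X : Type u} (f : X → ℝ≥0∞) : supDist f f = 0 := by
  simp [supDist]

lemma supDist_comm {X : Type u} (f g : X → ℝ≥0∞) : supDist f g = supDist g f := by
  unfold supDist
  exact iSup_congr fun x => sup_comm _ _

lemma supDist_eq_zero {X : Type u} {f g : X → ℝ≥0∞} (h : supDist f g ≤ 0) : f = g := by
  rw [supDist_le_iff] at h
  funext x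
  exact le_antisymm (by simpa using (h x).1) (by simpa using (h x).2)

/-- Extremal functions satisfy the tightness formula. -/
lemma extremal_eq_sup {X : Type u} {D : DistSpace X} {f : X → ℝ≥0∞}
    (hf : Extremal D f) (x : X) : f x = ⨆ y, D.d x y - f y := by
  classical
  refine le_antisymm ?_ (iSup_le fun y => tsub_le_iff_right.2 (hf.1 x y))
  set s := ⨆ y, D.d x y - f y with hs
  set g : X → ℝ≥0∞ := fun z => if z = x then s else f z with hg
  have hgDelta : g ∈ Delta D := by
    intro a b
    by_cases ha : a = x <;> by_cases hb : b = x
    · rw [ha, hb]; simp [hg, D.refl]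
    · have h1 : D.d x b - f b ≤ s := le_iSup (fun y => D.d x y - f y) b
      have h2 := tsub_le_iff_right.1 h1
      rw [ha]
      simpa [hg, hb] using h2
    · have h1 : D.d x a - f a ≤ s := le_iSup (fun y => D.d x y - f y) a
      have h2 := tsub_le_iff_right.1 h1
      have h3 : D.d a x ≤ s + f a := by rwa [D.symm a x]
      have h4 : D.d a x ≤ f a + s := by rwa [add_comm] at h3
      rw [hb]
      simpa [hg, ha] using h4
    · simpa [hg, ha, hb] using hf.1 a b
  have hgle : g ≤ f := by
    intro z
    by_cases hz : z = x
    · subst hz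
      simp only [hg, if_pos rfl]
      exact iSup_le fun y => tsub_le_iff_right.2 (hf.1 z y)
    · simp [hg, hz]
  have heq := hf.2 g hgDelta hgle
  have hx : g x = f x := by rw [heq]
  exact le_of_eq (by simpa [hg] using hx.symm)

/-- Every element of Delta dominates an extremal function. -/
lemma exists_extremal_le {X : Type u} {D : DistSpace X} {h : X → ℝ≥0∞}
    (hh : h ∈ Delta D) : ∃ f, Extremal D f ∧ f ≤ h := by
  classical
  set S : Set ((X → ℝ≥0∞)ᵒᵈ) :=
    {g | (OrderDual.ofDual g) ∈ Delta D ∧ OrderDual.ofDual g ≤ h} with hS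
  have hchain : ∀ c ⊆ S, IsChain (· ≤ ·) c → ∀ y ∈ c,
      ∃ ub ∈ S, ∀ z ∈ c, z ≤ ub := by
    intro c hcS hc y hyc
    set b : X → ℝ≥0∞ := fun x => ⨅ g : c, (OrderDual.ofDual g.1) x with hb
    refine ⟨OrderDual.toDual b, ⟨?_, ?_⟩, ?_⟩
    · intro x z
      have key := ENNReal.iInf_add_iInf (f := fun g : c => (OrderDual.ofDual g.1) x)
        (g := fun g : c => (OrderDual.ofDual g.1) z) ?_
      · show D.d x z ≤ b x + b z
        rw [hb]
        simp only
        rw [key]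
        exact le_iInf fun g => (hcS g.2).1 x z
      · intro gi gj
        rcases hc.total gi.2 gj.2 with hle | hle
        · exact ⟨gj, add_le_add (hle x) le_rfl⟩
        · exact ⟨gi, add_le_add le_rfl (hle z)⟩
    · intro x
      exact le_trans (iInf_le (fun g : c => (OrderDual.ofDual g.1) x) ⟨y, hyc⟩) ((hcS hyc).2 x)
    · intro g hg
      intro x
      exact iInf_le (fun g : c => (OrderDual.ofDual g.1) x) ⟨g, hg⟩
  obtain ⟨m, _, hm⟩ := zorn_le_nonempty₀ S hchain (OrderDual.toDual h) ⟨hh, le_rfl⟩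
  refine ⟨OrderDual.ofDual m, ⟨hm.1.1, ?_⟩, hm.1.2⟩
  intro g hg hgle
  have hgS : OrderDual.toDual g ∈ S := ⟨hg, le_trans hgle hm.1.2⟩
  exact le_antisymm hgle (hm.2 hgS hgle)

/-- Hyperconvexity of the envelope. -/
lemma env_hyperconvex {X : Type u} (D : DistSpace X) {ι : Type u}
    (g : ι → EnvType D) (ρ : ι → ℝ≥0∞)
    (hgr : ∀ j k, supDist (g j).1 (g k).1 ≤ ρ j + ρ k) :
    ∃ f : EnvType D, ∀ j, supDist f.1 (g j).1 ≤ ρ j := by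
  set h : X → ℝ≥0∞ := fun x => ⨅ j, ((g j).1 x + ρ j) with hh
  have hDelta : h ∈ Delta D := by
    intro x y
    show D.d x y ≤ h x + h y
    rw [hh]
    simp only
    rw [ENNReal.iInf_add]
    refine le_iInf fun j => ?_
    rw [add_comm, ENNReal.iInf_add]
    refine le_iInf fun k => ?_
    -- goal: D.d x y ≤ (g k).1 y + ρ k + ((g j).1 x + ρ j)
    have h1 : (g k).1 x ≤ (g j).1 x + (ρ j + ρ k) := ((supDist_le_iff.1 (hgr j k)) x).2
    calc D.d x y ≤ (g k).1 x + (g k).1 y := (g k).2.1 x y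
      _ ≤ ((g j).1 x + (ρ j + ρ k)) + (g k).1 y := add_le_add h1 le_rfl
      _ = (g k).1 y + ρ k + ((g j).1 x + ρ j) := by ring
  obtain ⟨f, hf, hfle⟩ := exists_extremal_le hDelta
  refine ⟨⟨f, hf⟩, fun j => ?_⟩
  rw [supDist_le_iff]
  intro x
  constructor
  · exact le_trans (hfle x) (iInf_le (fun j => (g j).1 x + ρ j) j)
  · rw [extremal_eq_sup (g j).2 x]
    refine iSup_le fun y => ?_
    have h1 : D.d x y - ((g j).1 y + ρ j) ≤ f x := by
      calc D.d x y - ((g j).1 y + ρ j) ≤ D.d x y - f y :=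
            tsub_le_tsub_left (le_trans (hfle y) (iInf_le (fun j => (g j).1 y + ρ j) j)) _
        _ ≤ ⨆ z, D.d x z - f z := le_iSup (fun z => D.d x z - f z) y
        _ = f x := (extremal_eq_sup hf x).symm
    have h2 : D.d x y ≤ f x + ((g j).1 y + ρ j) := tsub_le_iff_right.1 h1
    have h3 : D.d x y ≤ f x + ρ j + (g j).1 y := by
      calc D.d x y ≤ f x + ((g j).1 y + ρ j) := h2
        _ = f x + ρ j + (g j).1 y := by ring
    exact tsub_le_iff_right.2 h3

/-- The injective envelope `EX` is itself injective: every isometry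
`i : EX → Z` into a distance space admits a non-expanding left inverse. -/
theorem stmt8 {X : Type u} (D : DistSpace X) (Z : Type u) (DZ : DistSpace Z)
    (i : EnvType D → Z) (hi : ∀ f g : EnvType D, DZ.d (i f) (i g) = supDist f.1 g.1) :
    ∃ r : Z → EnvType D,
      (∀ a b : Z, supDist (r a).1 (r b).1 ≤ DZ.d a b) ∧ ∀ f, r (i f) = f := by
  classical
  set S : Set (Set (Z × EnvType D)) :=
    {c | (∀ f : EnvType D, (i f, f) ∈ c) ∧
      ∀ p ∈ c, ∀ q ∈ c, supDist p.2.1 q.2.1 ≤ DZ.d p.1 q.1} with hS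
  have hc0 : (Set.range fun f : EnvType D => (i f, f)) ∈ S := by
    constructor
    · intro f; exact ⟨f, rfl⟩
    · rintro p ⟨f, rfl⟩ q ⟨g, rfl⟩
      exact le_of_eq (hi f g).symm
  have hchains : ∀ c ⊆ S, IsChain (· ⊆ ·) c → c.Nonempty →
      ∃ ub ∈ S, ∀ s ∈ c, s ⊆ ub := by
    rintro c hcS hchain ⟨y, hyc⟩
    refine ⟨⋃₀ c, ⟨?_, ?_⟩, fun s hs => Set.subset_sUnion_of_mem hs⟩
    · intro f; exact ⟨y, hyc, (hcS hyc).1 f⟩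
    · rintro p ⟨s, hsc, hps⟩ q ⟨t, htc, hqt⟩
      rcases hchain.total hsc htc with hst | hts
      · exact (hcS htc).2 p (hst hps) q hqt
      · exact (hcS hsc).2 p hps q (hts hqt)
  obtain ⟨m, _, hm⟩ := zorn_subset_nonempty S hchains _ hc0
  have hmS : m ∈ S := hm.1
  -- every point of Z is in the domain of m
  have hz : ∀ z : Z, ∃ f : EnvType D, (z, f) ∈ m := by
    intro z
    by_contra hzn
    push_neg at hzn
    have hcond : ∀ p q : ↥m, supDist (p.1.2.1) (q.1.2.1) ≤ DZ.d z p.1.1 + DZ.d z q.1.1 := by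
      intro p q
      calc supDist p.1.2.1 q.1.2.1 ≤ DZ.d p.1.1 q.1.1 := hmS.2 p.1 p.2 q.1 q.2
        _ ≤ DZ.d p.1.1 z + DZ.d z q.1.1 := DZ.triangle _ _ _
        _ = DZ.d z p.1.1 + DZ.d z q.1.1 := by rw [DZ.symm p.1.1 z]
    obtain ⟨f, hf⟩ := env_hyperconvex D (ι := ↥m) (fun p => p.1.2)
      (fun p => DZ.d z p.1.1) hcond
    have hm'S : insert (z, f) m ∈ S := by
      constructor
      · intro g; exact Set.mem_insert_of_mem _ (hmS.1 g)
      · rintro p (hp | hp) q (hq | hq)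
        · subst hp; subst hq
          simp only
          rw [supDist_self, DZ.refl]
        · subst hp
          exact hf ⟨q, hq⟩
        · subst hq
          rw [supDist_comm, DZ.symm]
          exact hf ⟨p, hp⟩
        · exact hmS.2 p hp q hq
    have : insert (z, f) m ⊆ m := hm.2 hm'S (Set.subset_insert _ _)
    exact hzn f (this (Set.mem_insert _ _))
  refine ⟨fun z => (hz z).choose, ?_, ?_⟩
  · intro a b
    exact hmS.2 (a, (hz a).choose) (hz a).choose_spec (b, (hz b).choose) (hz b).choose_spec
  · intro f
    have h1 : (i f, (hz (i f)).choose) ∈ m := (hz (i f)).choose_spec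
    have h2 : (i f, f) ∈ m := hmS.1 f
    have h3 : supDist (hz (i f)).choose.1 f.1 ≤ DZ.d (i f) (i f) := hmS.2 _ h1 _ h2
    rw [DZ.refl] at h3
    exact Subtype.ext (supDist_eq_zero h3)
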